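/- Let A be an N×M complex matrix (viewed as a linear map from the Euclidean space ℂ^M to the Euclidean space ℂ^N), and let σ ≥ 0 be such that ‖Aᴴu‖ ≥ σ‖u‖ for every u ∈ ℂ^N, where Aᴴ is the conjugate transpose. Let T ≥ 0 with σ ≤ √T. Then for every h ∈ ℂ^N with ‖h‖ ≤ √T there exists θ ∈ ℂ^M with ‖θ‖ ≤ 1 such that ‖h + A·θ‖ ≤ √T − σ. -/

import Mathlib

open Matrix

/-- Key surjectivity-with-bound lemma, abstractly. -/
lemma exists_preimage_unit_ball {E F : Type*}
    [NormedAddCommGroup E] [InnerProductSpace ℂ E] [FiniteDimensional ℂ E]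
    [NormedAddCommGroup F] [InnerProductSpace ℂ F] [FiniteDimensional ℂ F]
    (B : E →ₗ[ℂ] F) (σ : ℝ) (hσ : 0 < σ)
    (hmin : ∀ u : F, σ * ‖u‖ ≤ ‖LinearMap.adjoint B u‖)
    (v : F) (hv : ‖v‖ ≤ σ) :
    ∃ θ : E, ‖θ‖ ≤ 1 ∧ B θ = v := by
  set Bd := LinearMap.adjoint B with hBd
  set S : F →ₗ[ℂ] F := B ∘ₗ Bd with hS
  have hinj : Function.Injective S := by
    rw [← LinearMap.ker_eq_bot, LinearMap.ker_eq_bot']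
    intro u hu
    have h1 : (inner ℂ (Bd u) (Bd u) : ℂ) = inner ℂ u (S u) := by
      rw [hS, LinearMap.comp_apply, hBd, LinearMap.adjoint_inner_left]
    have h2 : (inner ℂ (Bd u) (Bd u) : ℂ) = 0 := by rw [h1, hu, inner_zero_right]
    have h3 : Bd u = 0 := by rwa [inner_self_eq_zero] at h2
    have h4 := hmin u
    rw [h3, norm_zero] at h4
    have : ‖u‖ ≤ 0 := by nlinarith [norm_nonneg u]
    exact norm_le_zero_iff.mp this
  have hsurj : Function.Surjective S := (LinearMap.injective_iff_surjective).mp hinj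
  obtain ⟨w, hw⟩ := hsurj v
  refine ⟨Bd w, ?_, ?_⟩
  · have h1 : (‖Bd w‖ : ℝ)^2 = RCLike.re (inner ℂ (Bd w) (Bd w) : ℂ) := by
      rw [← inner_self_eq_norm_sq (𝕜 := ℂ)]
    have h2 : (inner ℂ (Bd w) (Bd w) : ℂ) = inner ℂ w v := by
      rw [hBd, LinearMap.adjoint_inner_left, ← LinearMap.comp_apply, ← hS, hw]
    have h3 : RCLike.re (inner ℂ w v : ℂ) ≤ ‖w‖ * ‖v‖ := by
      calc RCLike.re (inner ℂ w v : ℂ) ≤ ‖(inner ℂ w v : ℂ)‖ := RCLike.re_le_norm _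
        _ ≤ ‖w‖ * ‖v‖ := norm_inner_le_norm w v
    have h4 : σ * ‖w‖ ≤ ‖Bd w‖ := hmin w
    have h5 : ‖Bd w‖^2 ≤ ‖w‖ * ‖v‖ := by rw [h1, h2]; exact h3
    have h6 : ‖Bd w‖^2 ≤ ‖Bd w‖ := by
      calc ‖Bd w‖^2 ≤ ‖w‖ * ‖v‖ := h5
        _ ≤ ‖w‖ * σ := by nlinarith [norm_nonneg w]
        _ ≤ ‖Bd w‖ := by nlinarith [h4]
    nlinarith [norm_nonneg (Bd w)]
  · rw [← LinearMap.comp_apply, ← hS, hw]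

theorem exists_cancellation (N M : ℕ) (A : Matrix (Fin N) (Fin M) ℂ)
    (σ T : ℝ) (hσ : 0 ≤ σ) (hT : 0 ≤ T) (hσT : σ ≤ Real.sqrt T)
    (hmin : ∀ u : EuclideanSpace ℂ (Fin N), σ * ‖u‖ ≤ ‖Matrix.toEuclideanLin Aᴴ u‖) :
    ∀ h : EuclideanSpace ℂ (Fin N), ‖h‖ ≤ Real.sqrt T →
      ∃ θ : EuclideanSpace ℂ (Fin M), ‖θ‖ ≤ 1 ∧
        ‖h + Matrix.toEuclideanLin A θ‖ ≤ Real.sqrt T - σ := by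
  intro h hh
  rcases eq_or_lt_of_le hσ with hσ0 | hσpos
  · refine ⟨0, by simp, ?_⟩
    rw [map_zero, add_zero, ← hσ0, sub_zero]
    exact hh
  rcases eq_or_ne h 0 with rfl | hh0
  · refine ⟨0, by simp, ?_⟩
    simp only [map_zero, add_zero, norm_zero]
    linarith
  have hhn : (0:ℝ) < ‖h‖ := norm_pos_iff.mpr hh0
  set c : ℝ := min σ ‖h‖ with hc
  have hc0 : 0 < c := lt_min hσpos hhn
  have hcσ : c ≤ σ := min_le_left _ _
  have hch : c ≤ ‖h‖ := min_le_right _ _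
  set v : EuclideanSpace ℂ (Fin N) := (-(c / ‖h‖) : ℂ) • h with hv
  have hvn : ‖v‖ = c := by
    rw [hv, norm_smul]
    simp only [norm_neg]
    rw [norm_div, Complex.norm_real, Complex.norm_real,
      Real.norm_of_nonneg hc0.le, Real.norm_of_nonneg hhn.le]
    field_simp
  have hmin' : ∀ u : EuclideanSpace ℂ (Fin N),
      σ * ‖u‖ ≤ ‖LinearMap.adjoint (Matrix.toEuclideanLin A) u‖ := by
    intro u
    rw [← Matrix.toEuclideanLin_conjTranspose_eq_adjoint]
    exact hmin u
  obtain ⟨θ, hθ1, hθ2⟩ := exists_preimage_unit_ball (Matrix.toEuclideanLin A) σ hσpos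
    hmin' v (by rw [hvn]; exact hcσ)
  refine ⟨θ, hθ1, ?_⟩
  rw [hθ2, hv]
  have : h + (-(↑c / ↑‖h‖) : ℂ) • h = ((1 - c / ‖h‖ : ℝ) : ℂ) • h := by
    push_cast
    rw [sub_smul, one_smul]
    ring_nf
    rw [neg_smul, ← sub_eq_add_neg]
  rw [this, norm_smul, Complex.norm_real, Real.norm_of_nonneg (by
    rw [sub_nonneg]; exact (div_le_one hhn).mpr hch)]
  have hexp : (1 - c / ‖h‖) * ‖h‖ = ‖h‖ - c := by field_simp
  rw [hexp]
  rcases min_cases σ ‖h‖ with ⟨h1, h2⟩ | ⟨h1, h2⟩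
  · rw [hc, h1]; linarith
  · rw [hc, h1]; simp only [sub_self]; linarith
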